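/- Let g : ℝ → ℝ be C¹, odd, with g'(0) > 0 and g > 0 on (0, α₀). Let u solve u'' + ((N-1)/r)u' + g(u) = 0 on (0,∞) with u(0) = α ∈ (0, α₀), u'(0) = 0, N ≥ 2, and suppose 0 < u(r) < α₀ on [0, R]. Then u'(r) < 0 for all r ∈ (0, R], i.e. u is strictly decreasing as long as it remains in (0, α₀). -/

import Mathlib

/-- For the radial equation `u'' + ((N-1)/r)u' + g(u) = 0`, `N ≥ 2`, with `u(0)=α ∈ (0,α₀)`,
`u'(0)=0`, and `g > 0` on `(0,α₀)`: as long as `0 < u < α₀` on `[0,R]`, the solution is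
strictly decreasing, i.e. `u' < 0` on `(0,R]`. -/
theorem stmt_5 (N : ℕ) (hN : 2 ≤ N) (g : ℝ → ℝ) (α₀ α R : ℝ)
    (hα₀ : 0 < α₀) (hα : 0 < α) (hαα₀ : α < α₀) (hR : 0 < R)
    (hg : ContDiff ℝ 1 g) (hodd : ∀ z, g (-z) = -g z)
    (hg'0 : 0 < deriv g 0) (hgpos : ∀ z, 0 < z → z < α₀ → 0 < g z)
    (u : ℝ → ℝ) (hu : ContDiff ℝ 2 u)
    (heq : ∀ r, 0 < r → deriv (deriv u) r + ((N : ℝ) - 1) / r * deriv u r + g (u r) = 0)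
    (h0 : u 0 = α) (h0' : deriv u 0 = 0)
    (hbetween : ∀ r ∈ Set.Icc (0:ℝ) R, 0 < u r ∧ u r < α₀) :
    ∀ r ∈ Set.Ioc (0:ℝ) R, deriv u r < 0 := by
  have hu2 : ContDiff ℝ (1 + 1) u := by exact_mod_cast hu
  have hu' : ContDiff ℝ 1 (deriv u) := (contDiff_succ_iff_deriv.mp hu2).2.2
  set v : ℝ → ℝ := fun r => r ^ (N - 1) * deriv u r with hvdef
  have hvd : ∀ r : ℝ, HasDerivAt v
      (((N - 1 : ℕ) : ℝ) * r ^ (N - 2) * deriv u r + r ^ (N - 1) * deriv (deriv u) r) r := by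
    intro r
    have h1 : HasDerivAt (fun x : ℝ => x ^ (N - 1)) (((N - 1 : ℕ) : ℝ) * r ^ (N - 2)) r := by
      have : N - 1 - 1 = N - 2 := by omega
      simpa [this] using hasDerivAt_pow (N - 1) r
    have h2 : HasDerivAt (deriv u) (deriv (deriv u) r) r :=
      ((hu'.differentiable one_ne_zero) r).hasDerivAt
    exact h1.mul h2
  have hcast : ((N - 1 : ℕ) : ℝ) = (N : ℝ) - 1 := by
    have : 1 ≤ N := by omega
    push_cast [this]; ring
  have hdv_neg : ∀ r ∈ Set.Ioo (0:ℝ) R, deriv v r < 0 := by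
    intro r hr
    have hrpos : 0 < r := hr.1
    have hder := (hvd r).deriv
    rw [hder, hcast]
    have hddu : deriv (deriv u) r = -(((N : ℝ) - 1) / r * deriv u r + g (u r)) := by
      have := heq r hrpos
      linarith
    rw [hddu]
    have hpow : r ^ (N - 1) = r * r ^ (N - 2) := by
      have : N - 1 = (N - 2) + 1 := by omega
      rw [this]; ring
    have hgu : 0 < g (u r) := by
      have hb := hbetween r ⟨le_of_lt hrpos, le_of_lt hr.2⟩
      exact hgpos _ hb.1 hb.2
    have key : ((N : ℝ) - 1) * r ^ (N - 2) * deriv u r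
        + r ^ (N - 1) * -(((N : ℝ) - 1) / r * deriv u r + g (u r))
        = -(r ^ (N - 1) * g (u r)) := by
      rw [hpow]; field_simp; ring
    rw [key]
    have : 0 < r ^ (N - 1) := pow_pos hrpos _
    nlinarith
  have hvcont : ContinuousOn v (Set.Icc 0 R) :=
    (fun x _ => ((hvd x).differentiableAt.continuousAt).continuousWithinAt)
  have hanti : StrictAntiOn v (Set.Icc 0 R) := by
    apply strictAntiOn_of_deriv_neg (convex_Icc 0 R) hvcont
    intro x hx
    rw [interior_Icc] at hx
    exact hdv_neg x hx
  have hv0 : v 0 = 0 := by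
    have : (0:ℝ) ^ (N - 1) = 0 := by
      apply zero_pow; omega
    simp [hvdef, this]
  intro r hr
  have hvr : v r < 0 := by
    have := hanti (Set.left_mem_Icc.mpr (le_of_lt hR)) ⟨le_of_lt hr.1, hr.2⟩ hr.1
    rwa [hv0] at this
  have hpow : 0 < r ^ (N - 1) := pow_pos hr.1 _
  by_contra h
  push_neg at h
  have : 0 ≤ v r := mul_nonneg (le_of_lt hpow) h
  linarith
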